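/- Let H be a Hilbert space, G a positive self-adjoint operator, A a linear operator on D(G¹ᐟ²), and N(E) = sup{‖Aφ‖ : φ ∈ D(G¹ᐟ²), ‖φ‖ ≤ 1, ‖G¹ᐟ²φ‖² ≤ E}. If φ, ψ ∈ D(G¹ᐟ²) satisfy ‖G¹ᐟ²φ‖² ≤ E, ‖G¹ᐟ²ψ‖² ≤ E, and ‖φ − ψ‖ ≤ ε for some ε > 0, then ‖A(φ − ψ)‖ ≤ ε · N(4E/ε²). -/

import Mathlib

open scoped ComplexOrder ENNReal

/-- Quantitative uniform continuity estimate (Corollary 1 with `K = ℂ`):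
if `‖√G φ‖² ≤ E`, `‖√G ψ‖² ≤ E` and `‖φ − ψ‖ ≤ ε`, then
`‖A(φ − ψ)‖ ≤ ε · N(4E/ε²)`, where `N` is the (possibly infinite) pure-state
operator E-norm of `A`. -/
theorem stmt12 {H : Type*} [NormedAddCommGroup H] [InnerProductSpace ℂ H] [CompleteSpace H]
    (S : Submodule ℂ H) (hdense : Dense (S : Set H))
    (sqrtG : S →ₗ[ℂ] H)
    (hsym : ∀ x y : S, (inner ℂ (sqrtG x) (y : H) : ℂ) = inner ℂ (x : H) (sqrtG y))
    (hpos : ∀ x : S, 0 ≤ (inner ℂ (x : H) (sqrtG x) : ℂ))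
    (A : S →ₗ[ℂ] H)
    (N : ℝ → ℝ≥0∞)
    (hN : ∀ E : ℝ, N E = ⨆ (χ : S) (_ : ‖(χ : H)‖ ≤ 1 ∧ ‖sqrtG χ‖ ^ 2 ≤ E),
      (‖A χ‖₊ : ℝ≥0∞))
    (E ε : ℝ) (hE : 0 < E) (hε : 0 < ε)
    (φ ψ : S) (hφ : ‖sqrtG φ‖ ^ 2 ≤ E) (hψ : ‖sqrtG ψ‖ ^ 2 ≤ E)
    (hd : ‖(φ : H) - (ψ : H)‖ ≤ ε) :
    (‖A (φ - ψ)‖₊ : ℝ≥0∞) ≤ ENNReal.ofReal ε * N (4 * E / ε ^ 2) := by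

  set χ : S := ((ε : ℂ))⁻¹ • (φ - ψ) with hχ
  have hcoe : ((χ : H)) = ((ε : ℂ))⁻¹ • ((φ : H) - (ψ : H)) := rfl
  have hεinv : ‖((ε : ℂ))⁻¹‖ = ε⁻¹ := by
    rw [norm_inv, Complex.norm_real, Real.norm_eq_abs, abs_of_pos hε]
  have hχnorm : ‖(χ : H)‖ ≤ 1 := by
    rw [hcoe, norm_smul, hεinv]
    calc ε⁻¹ * ‖(φ : H) - (ψ : H)‖ ≤ ε⁻¹ * ε := by
          exact mul_le_mul_of_nonneg_left hd (by positivity)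
      _ = 1 := inv_mul_cancel₀ hε.ne'
  have hG4 : ‖sqrtG (φ - ψ)‖ ^ 2 ≤ 4 * E := by
    have h1 : ‖sqrtG (φ - ψ)‖ ≤ ‖sqrtG φ‖ + ‖sqrtG ψ‖ := by
      rw [map_sub]; exact norm_sub_le _ _
    have h2 : ‖sqrtG (φ - ψ)‖ ^ 2 ≤ (‖sqrtG φ‖ + ‖sqrtG ψ‖) ^ 2 :=
      pow_le_pow_left₀ (norm_nonneg _) h1 2
    nlinarith [norm_nonneg (sqrtG φ), norm_nonneg (sqrtG ψ),
      sq_nonneg (‖sqrtG φ‖ - ‖sqrtG ψ‖)]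
  have hχG : ‖sqrtG χ‖ ^ 2 ≤ 4 * E / ε ^ 2 := by
    have : sqrtG χ = ((ε : ℂ))⁻¹ • sqrtG (φ - ψ) := by rw [hχ, map_smul]
    rw [this, norm_smul, hεinv, mul_pow]
    rw [div_eq_mul_inv, mul_comm (4 * E), ← inv_pow]
    exact mul_le_mul_of_nonneg_left hG4 (by positivity)
  have hbound : (‖A χ‖₊ : ℝ≥0∞) ≤ N (4 * E / ε ^ 2) := by
    rw [hN]
    exact le_iSup_of_le χ (le_iSup_of_le ⟨hχnorm, hχG⟩ le_rfl)
  have hAχ : A χ = ((ε : ℂ))⁻¹ • A (φ - ψ) := by rw [hχ, map_smul]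
  have hkey : (‖A (φ - ψ)‖₊ : ℝ≥0∞) = ENNReal.ofReal ε * (‖A χ‖₊ : ℝ≥0∞) := by
    rw [hAχ, ← enorm_eq_nnnorm, ← enorm_eq_nnnorm, ← ofReal_norm, ← ofReal_norm,
      norm_smul, hεinv, ← ENNReal.ofReal_mul hε.le, ← mul_assoc,
      mul_inv_cancel₀ hε.ne', one_mul]
  rw [hkey]
  exact mul_le_mul_right hbound _
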